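/- Let A_∞ = 0 ∈ ℂ, and for k ≥ 1 let A_k = λ^{k−1} e^{iα} and B_k = λ^{k−1} e^{−iα} with 0 < λ ≤ 1/2 and 0 < α < π/6. Let C = cos α + √3 sin α (the Melzak point of A₁ and B₁, apex of the equilateral triangle on [A₁B₁] away from A_∞). Then the angle ∠A₂ C B₂ is strictly smaller than the angle ∠A₂ A_∞ B₂ = 2α. -/

import Mathlib

set_option maxHeartbeats 1000000
open EuclideanGeometry Complex

lemma angle_conj_aux (x y : ℝ) :
    InnerProductGeometry.angle (Complex.mk x y) (Complex.mk x (-y)) =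
      Real.arccos ((x ^ 2 - y ^ 2) / (x ^ 2 + y ^ 2)) := by
  have hnn : (0:ℝ) ≤ x ^ 2 + y ^ 2 := by positivity
  unfold InnerProductGeometry.angle
  rw [Complex.inner]
  congr 1
  have h1 : (starRingEnd ℂ (Complex.mk x y) * Complex.mk x (-y)).re = x ^ 2 - y ^ 2 := by
    simp [Complex.mul_re, Complex.conj_re, Complex.conj_im]; ring
  have h2 : ‖Complex.mk x y‖ = Real.sqrt (x ^ 2 + y ^ 2) := by
    rw [Complex.norm_def, Complex.normSq_mk]; ring_nf
  have h3 : ‖Complex.mk x (-y)‖ = Real.sqrt (x ^ 2 + y ^ 2) := by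
    rw [Complex.norm_def, Complex.normSq_mk]; ring_nf
  rw [mul_comm (Complex.mk x (-y)), h1, h2, h3, Real.mul_self_sqrt hnn]

theorem stmt_19 (α lam : ℝ) (hα : 0 < α) (hα6 : α < Real.pi / 6)
    (hl : 0 < lam) (hl2 : lam ≤ 1 / 2)
    (A₂ B₂ C : ℂ)
    (hA₂ : A₂ = (lam : ℂ) * Complex.exp ((α : ℂ) * Complex.I))
    (hB₂ : B₂ = (lam : ℂ) * Complex.exp (-(α : ℂ) * Complex.I))
    (hC : C = ((Real.cos α + Real.sqrt 3 * Real.sin α : ℝ) : ℂ)) :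
    ∠ A₂ C B₂ < ∠ A₂ (0 : ℂ) B₂ ∧ ∠ A₂ (0 : ℂ) B₂ = 2 * α := by
  have hπ := Real.pi_pos
  set s := Real.sin α with hs_def
  set cc := Real.cos α with hc_def
  have hs : 0 < s := Real.sin_pos_of_pos_of_lt_pi hα (by linarith)
  have hc : 0 < cc := Real.cos_pos_of_mem_Ioo ⟨by linarith, by linarith⟩
  have hsq : s ^ 2 + cc ^ 2 = 1 := Real.sin_sq_add_cos_sq α
  have h3 : (0:ℝ) < Real.sqrt 3 := Real.sqrt_pos.mpr (by norm_num)
  set c := cc + Real.sqrt 3 * s with hcdef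
  set x := lam * cc - c with hxdef
  set y := lam * s with hydef
  have hA : A₂ = Complex.mk (lam * cc) y := by
    rw [hA₂]; apply Complex.ext <;>
      simp [Complex.exp_ofReal_mul_I_re, Complex.exp_ofReal_mul_I_im, hydef, hc_def, hs_def]
  have hB : B₂ = Complex.mk (lam * cc) (-y) := by
    rw [hB₂]; apply Complex.ext <;>
      simp [neg_mul, ← Complex.ofReal_neg, Complex.exp_ofReal_mul_I_re,
        Complex.exp_ofReal_mul_I_im, hydef, hc_def, hs_def]
  have hC' : C = Complex.mk c 0 := by
    rw [hC]; apply Complex.ext <;> simp [hcdef]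
  -- the angle at the origin
  have hangle0 : ∠ A₂ (0 : ℂ) B₂ = 2 * α := by
    rw [EuclideanGeometry.angle, hA, hB]; simp only [vsub_eq_sub]
    have e1 : Complex.mk (lam * cc) y - 0 = Complex.mk (lam * cc) y := by ring
    have e2 : Complex.mk (lam * cc) (-y) - 0 = Complex.mk (lam * cc) (-y) := by ring
    rw [e1, e2, angle_conj_aux]
    have hd : (lam * cc) ^ 2 + y ^ 2 = lam ^ 2 := by
      rw [hydef]; nlinarith [hsq]
    have hn : (lam * cc) ^ 2 - y ^ 2 = lam ^ 2 * Real.cos (2 * α) := by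
      rw [hydef, Real.cos_two_mul]; nlinarith [hsq]
    rw [hd, hn, mul_div_cancel_left₀ _ (pow_ne_zero 2 hl.ne'),
      Real.arccos_cos (by linarith) (by linarith)]
  refine ⟨?_, hangle0⟩
  rw [hangle0, EuclideanGeometry.angle, hA, hB, hC']; simp only [vsub_eq_sub]
  have e1 : Complex.mk (lam * cc) y - Complex.mk c 0 = Complex.mk x y := by
    apply Complex.ext <;> simp [hxdef]
  have e2 : Complex.mk (lam * cc) (-y) - Complex.mk c 0 = Complex.mk x (-y) := by
    apply Complex.ext <;> simp [hxdef]
  rw [e1, e2, angle_conj_aux]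
  have hypos : 0 < y := mul_pos hl hs
  have hden : (0:ℝ) < x ^ 2 + y ^ 2 := by positivity
  have key : Real.cos (2 * α) < (x ^ 2 - y ^ 2) / (x ^ 2 + y ^ 2) := by
    rw [lt_div_iff₀ hden, Real.cos_two_mul]
    have hxlt : lam * cc < c - lam * cc := by nlinarith
    have hx2 : (lam * cc) ^ 2 < x ^ 2 := by
      calc (lam * cc) ^ 2 < (c - lam * cc) ^ 2 :=
            pow_lt_pow_left₀ hxlt (mul_pos hl hc).le two_ne_zero
        _ = x ^ 2 := by rw [hxdef]; ring
    have hy2 : y ^ 2 = lam ^ 2 * s ^ 2 := by rw [hydef]; ring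
    nlinarith [mul_pos (mul_pos hs hs) (sub_pos.mpr hx2), hsq, hy2, sq_nonneg x, sq_nonneg y]
  have := Real.strictAntiOn_arccos
    ⟨Real.neg_one_le_cos (2*α), Real.cos_le_one (2*α)⟩
    ⟨by rw [le_div_iff₀ hden]; nlinarith [sq_nonneg x, sq_nonneg y],
     by rw [div_le_one hden]; nlinarith [sq_nonneg y]⟩ key
  calc Real.arccos ((x ^ 2 - y ^ 2) / (x ^ 2 + y ^ 2)) < Real.arccos (Real.cos (2*α)) := this
    _ = 2 * α := Real.arccos_cos (by linarith) (by linarith)
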